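/- Let A ∈ ℝ^{n×n}, B ∈ ℝ^{n×m} and λ ∈ ℂ. Then there exists a nonzero vector ξ ∈ ℂⁿ with ξᵀA = λξᵀ and ξᵀB = 0 if and only if λ is an eigenvalue of A + BK for every K ∈ ℝ^{m×n}. -/

import Mathlib

open Matrix Polynomial

/-- Complexification of a real matrix. -/
def toC {a b : Type*} (M : Matrix a b ℝ) : Matrix a b ℂ := M.map Complex.ofReal

open Module in
private lemma pbh_bump {n m : ℕ} :
    ∀ (k : ℕ) (M : Matrix (Fin n) (Fin n) ℂ) (B : Matrix (Fin n) (Fin m) ℂ),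
      (LinearMap.range M.mulVecLin ⊔ LinearMap.range B.mulVecLin = ⊤) →
      n ≤ finrank ℂ (LinearMap.range M.mulVecLin) + k →
      ∃ K : Matrix (Fin m) (Fin n) ℂ, (M + B * K).det ≠ 0 := by
  intro k
  induction k with
  | zero =>
    intro M B _ hk
    have hfr : finrank ℂ (LinearMap.range M.mulVecLin) = n := by
      have h1 : finrank ℂ (LinearMap.range M.mulVecLin) ≤ finrank ℂ (Fin n → ℂ) :=
        Submodule.finrank_le _
      rw [Module.finrank_fin_fun] at h1
      omega
    have htop : LinearMap.range M.mulVecLin = ⊤ := by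
      apply Submodule.eq_top_of_finrank_eq
      rw [hfr, Module.finrank_fin_fun]
    have hinj : Function.Injective M.mulVecLin :=
      LinearMap.injective_iff_surjective.mpr (LinearMap.range_eq_top.mp htop)
    refine ⟨0, ?_⟩
    rw [Matrix.mul_zero, add_zero]
    intro hdet
    obtain ⟨v, hv0, hv⟩ := (Matrix.exists_mulVec_eq_zero_iff).mpr hdet
    exact hv0 (hinj (by simpa [Matrix.mulVecLin_apply] using hv))
  | succ k ih =>
    intro M B hsup hk
    by_cases hfin : n ≤ finrank ℂ (LinearMap.range M.mulVecLin) + k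
    · exact ih M B hsup hfin
    have hlt : finrank ℂ (LinearMap.range M.mulVecLin) + k < n := by omega
    have hMne : LinearMap.range M.mulVecLin ≠ ⊤ := by
      intro h
      rw [h, finrank_top, Module.finrank_fin_fun] at hlt
      omega
    -- get v ≠ 0 in the kernel
    have hninj : ¬ Function.Injective M.mulVecLin := by
      intro hi
      exact hMne (LinearMap.range_eq_top.mpr (LinearMap.injective_iff_surjective.mp hi))
    obtain ⟨a, b, hab, hne⟩ := Function.not_injective_iff.mp hninj
    set v : Fin n → ℂ := a - b with hv
    have hv0 : v ≠ 0 := sub_ne_zero.mpr hne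
    have hMv : M *ᵥ v = 0 := by
      have : M.mulVecLin (a - b) = 0 := by rw [map_sub, hab, sub_self]
      simpa [Matrix.mulVecLin_apply] using this
    -- get u = B *ᵥ c not in range M
    have hBle : ¬ LinearMap.range B.mulVecLin ≤ LinearMap.range M.mulVecLin := by
      intro hle
      exact hMne (top_unique (hsup ▸ sup_le le_rfl hle))
    obtain ⟨u, huB, huM⟩ := SetLike.not_le_iff_exists.mp hBle
    obtain ⟨c, rfl⟩ := huB
    obtain ⟨i₀, hi₀⟩ := Function.ne_iff.mp hv0
    have hi₀' : v i₀ ≠ 0 := by simpa using hi₀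
    set f : Fin n → ℂ := fun j => if j = i₀ then (v i₀)⁻¹ else 0 with hf
    have hfv : f ⬝ᵥ v = 1 := by
      simp [dotProduct, hf, ite_mul, inv_mul_cancel₀ hi₀']
    set K₁ : Matrix (Fin m) (Fin n) ℂ := Matrix.of fun p q => c p * f q with hK₁def
    have hK₁ : ∀ x : Fin n → ℂ, K₁ *ᵥ x = (f ⬝ᵥ x) • c := by
      intro x; funext p
      simp only [Matrix.mulVec, dotProduct, hK₁def, Matrix.of_apply, Pi.smul_apply,
        smul_eq_mul, Finset.sum_mul]
      exact Finset.sum_congr rfl fun q _ => by ring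
    set N := M + B * K₁ with hNdef
    have hN : ∀ x : Fin n → ℂ, N *ᵥ x = M *ᵥ x + (f ⬝ᵥ x) • (B.mulVecLin c) := by
      intro x
      rw [hNdef, Matrix.add_mulVec, ← Matrix.mulVec_mulVec, hK₁, Matrix.mulVec_smul]
      rfl
    have hle : LinearMap.range M.mulVecLin ≤ LinearMap.range N.mulVecLin := by
      rintro y ⟨x, rfl⟩
      refine ⟨x - (f ⬝ᵥ x) • v, ?_⟩
      simp only [Matrix.mulVecLin_apply, hN, Matrix.mulVec_sub, Matrix.mulVec_smul, hMv,
        smul_zero, sub_zero, dotProduct_sub, dotProduct_smul, hfv, smul_eq_mul, mul_one,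
        sub_self, zero_smul, add_zero]
    have huN : B.mulVecLin c ∈ LinearMap.range N.mulVecLin := by
      refine ⟨v, ?_⟩
      simp [Matrix.mulVecLin_apply, hN v, hMv, hfv]
    have hltr : LinearMap.range M.mulVecLin < LinearMap.range N.mulVecLin :=
      lt_of_le_of_ne hle (fun h => huM (h ▸ huN))
    have hfr : finrank ℂ (LinearMap.range M.mulVecLin) <
        finrank ℂ (LinearMap.range N.mulVecLin) :=
      Submodule.finrank_lt_finrank_of_lt hltr
    have hsup' : LinearMap.range N.mulVecLin ⊔ LinearMap.range B.mulVecLin = ⊤ :=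
      top_unique (hsup ▸ sup_le_sup_right hle _)
    obtain ⟨K₂, hK₂⟩ := ih N B hsup' (by omega)
    exact ⟨K₁ + K₂, by rwa [Matrix.mul_add, ← add_assoc]⟩

private lemma pbh_dual {n m : ℕ} (M : Matrix (Fin n) (Fin n) ℂ) (B : Matrix (Fin n) (Fin m) ℂ)
    (h : ∀ ξ : Fin n → ℂ, ξ ᵥ* M = 0 → ξ ᵥ* B = 0 → ξ = 0) :
    LinearMap.range M.mulVecLin ⊔ LinearMap.range B.mulVecLin = ⊤ := by
  by_contra hne
  obtain ⟨f, hf0, hfmap⟩ :=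
    Submodule.exists_dual_map_eq_bot_of_lt_top (p := LinearMap.range M.mulVecLin ⊔
      LinearMap.range B.mulVecLin) (lt_top_iff_ne_top.mpr hne) inferInstance
  have hker : ∀ x ∈ LinearMap.range M.mulVecLin ⊔ LinearMap.range B.mulVecLin, f x = 0 := by
    intro x hx
    have : f x ∈ Submodule.map f (LinearMap.range M.mulVecLin ⊔ LinearMap.range B.mulVecLin) :=
      Submodule.mem_map_of_mem hx
    rw [hfmap] at this
    simpa using this
  set ξ : Fin n → ℂ := fun i => f (Pi.single i 1) with hξ
  have hbasis : ∀ i : Fin n, (fun j => if i = j then (1:ℂ) else 0) = Pi.single i 1 := by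
    intro i; funext j; simp [Pi.single_apply, eq_comm]
  have happly : ∀ x : Fin n → ℂ, f x = ∑ i, x i * ξ i := by
    intro x
    rw [LinearMap.pi_apply_eq_sum_univ f x]
    exact Finset.sum_congr rfl fun i _ => by rw [hbasis i]; simp [hξ]
  have hξM : ξ ᵥ* M = 0 := by
    funext j
    have h1 : Mᵀ j ∈ LinearMap.range M.mulVecLin ⊔ LinearMap.range B.mulVecLin :=
      Submodule.mem_sup_left ⟨Pi.single j 1, by rw [Matrix.mulVecLin_apply,
        Matrix.mulVec_single_one, Matrix.col_def]⟩
    have h2 := hker _ h1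
    rw [happly] at h2
    simpa [Matrix.vecMul, dotProduct, Matrix.transpose_apply, mul_comm] using h2
  have hξB : ξ ᵥ* B = 0 := by
    funext j
    have h1 : Bᵀ j ∈ LinearMap.range M.mulVecLin ⊔ LinearMap.range B.mulVecLin :=
      Submodule.mem_sup_right ⟨Pi.single j 1, by rw [Matrix.mulVecLin_apply,
        Matrix.mulVec_single_one, Matrix.col_def]⟩
    have h2 := hker _ h1
    rw [happly] at h2
    simpa [Matrix.vecMul, dotProduct, Matrix.transpose_apply, mul_comm] using h2
  have := h ξ hξM hξB
  apply hf0
  apply LinearMap.ext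
  intro x
  rw [happly, this]
  simp

private lemma pbh_real {n m : ℕ} (M : Matrix (Fin n) (Fin n) ℂ) (B : Matrix (Fin n) (Fin m) ℝ)
    (h : LinearMap.range M.mulVecLin ⊔ LinearMap.range (toC B).mulVecLin = ⊤) :
    ∃ K : Matrix (Fin m) (Fin n) ℝ, (M + toC B * toC K).det ≠ 0 := by
  obtain ⟨Kc, hKc⟩ := pbh_bump n M (toC B) h (Nat.le_add_left n _)
  set K₁ : Matrix (Fin m) (Fin n) ℝ := Kc.map Complex.re with hK₁
  set K₂ : Matrix (Fin m) (Fin n) ℝ := Kc.map Complex.im with hK₂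
  set E : Matrix (Fin n) (Fin n) ℂ := M + toC B * toC K₁ with hE
  set F : Matrix (Fin n) (Fin n) ℂ := toC B * toC K₂ with hF
  set p : Polynomial ℂ := (E.map Polynomial.C + (X : ℂ[X]) • F.map Polynomial.C).det with hp
  have heval : ∀ t : ℂ, p.eval t = (E + t • F).det := by
    intro t
    have h1 := RingHom.map_det (Polynomial.evalRingHom t)
      (E.map Polynomial.C + (X : ℂ[X]) • F.map Polynomial.C)
    simp only [Polynomial.coe_evalRingHom] at h1
    rw [hp, h1]
    congr 1
    ext i j
    simp only [RingHom.mapMatrix_apply, Matrix.map_apply, Matrix.map_add, Matrix.add_apply,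
      Matrix.smul_apply, smul_eq_mul, Polynomial.coe_evalRingHom, Polynomial.eval_add,
      Polynomial.eval_mul, Polynomial.eval_C, Polynomial.eval_X]
    try ring
  have hdec : toC K₁ + Complex.I • toC K₂ = Kc := by
    ext i j
    simp only [toC, Matrix.map_apply, Matrix.add_apply, Matrix.smul_apply, smul_eq_mul,
      hK₁, hK₂]
    rw [mul_comm]
    exact Complex.re_add_im _
  have hpI : p.eval Complex.I ≠ 0 := by
    rw [heval]
    have : E + Complex.I • F = M + toC B * Kc := by
      rw [hE, hF, ← hdec, Matrix.mul_add, add_assoc, Matrix.mul_smul]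
    rwa [this]
  have hp0 : p ≠ 0 := fun hz => hpI (by simp [hz])
  have hreal : ∃ t : ℝ, p.eval (t : ℂ) ≠ 0 := by
    by_contra hall
    push_neg at hall
    apply hp0
    apply Polynomial.eq_zero_of_infinite_isRoot
    exact Set.Infinite.mono (by rintro x ⟨t, rfl⟩; exact hall t)
      (Set.infinite_range_of_injective Complex.ofReal_injective)
  obtain ⟨t, ht⟩ := hreal
  refine ⟨K₁ + t • K₂, ?_⟩
  have hKt : toC (K₁ + t • K₂) = toC K₁ + (t : ℂ) • toC K₂ := by
    ext i j
    simp only [toC, Matrix.map_apply, Matrix.add_apply, Matrix.smul_apply, smul_eq_mul]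
    push_cast
    ring
  have : M + toC B * toC (K₁ + t • K₂) = E + (t : ℂ) • F := by
    rw [hKt, Matrix.mul_add, hE, hF, add_assoc, Matrix.mul_smul]
  rw [this, ← heval]
  exact ht

private lemma toC_add_mul {n m : ℕ} (A : Matrix (Fin n) (Fin n) ℝ)
    (B : Matrix (Fin n) (Fin m) ℝ) (K : Matrix (Fin m) (Fin n) ℝ) :
    toC (A + B * K) = toC A + toC B * toC K := by
  ext i j
  simp only [toC, Matrix.map_apply, Matrix.add_apply, Matrix.mul_apply]
  push_cast
  ring

private lemma vecMul_smul_one {n : ℕ} (lam : ℂ) (ξ : Fin n → ℂ) :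
    ξ ᵥ* (lam • (1 : Matrix (Fin n) (Fin n) ℂ)) = lam • ξ := by
  funext j
  simp [Matrix.vecMul, dotProduct, Matrix.smul_apply, Matrix.one_apply, mul_ite,
    Finset.sum_ite_eq, mul_comm]

private lemma smul_one_mulVec {n : ℕ} (lam : ℂ) (v : Fin n → ℂ) :
    (lam • (1 : Matrix (Fin n) (Fin n) ℂ)) *ᵥ v = lam • v := by
  rw [Matrix.smul_mulVec, Matrix.one_mulVec]

/-- **PBH unremovable mode.** There is a nonzero `ξ ∈ ℂⁿ` with `ξᵀA = λξᵀ` and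
`ξᵀB = 0` iff `λ` is an eigenvalue of `A + BK` for every real `K`. -/
theorem pbh_uncontrollable_mode_iff (n m : ℕ)
    (A : Matrix (Fin n) (Fin n) ℝ) (B : Matrix (Fin n) (Fin m) ℝ) (lam : ℂ) :
    (∃ ξ : Fin n → ℂ, ξ ≠ 0 ∧
      Matrix.vecMul ξ (toC A) = lam • ξ ∧ Matrix.vecMul ξ (toC B) = 0) ↔
    (∀ K : Matrix (Fin m) (Fin n) ℝ, ∃ v : Fin n → ℂ, v ≠ 0 ∧
      Matrix.mulVec (toC (A + B * K)) v = lam • v) := by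
  constructor
  · rintro ⟨ξ, hξ0, hξA, hξB⟩ K
    have h2 : ξ ᵥ* (toC (A + B * K) - lam • 1) = 0 := by
      rw [Matrix.vecMul_sub, toC_add_mul, Matrix.vecMul_add, ← Matrix.vecMul_vecMul, hξA,
        hξB, Matrix.zero_vecMul, add_zero, vecMul_smul_one, sub_self]
    have hdet : (toC (A + B * K) - lam • 1).det = 0 :=
      Matrix.exists_vecMul_eq_zero_iff.mp ⟨ξ, hξ0, h2⟩
    obtain ⟨w, hw0, hw⟩ := Matrix.exists_mulVec_eq_zero_iff.mpr hdet
    refine ⟨w, hw0, ?_⟩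
    rw [Matrix.sub_mulVec, Matrix.smul_mulVec, Matrix.one_mulVec, sub_eq_zero] at hw
    exact hw
  · intro hK
    by_contra hno
    push_neg at hno
    set M : Matrix (Fin n) (Fin n) ℂ := toC A - lam • 1 with hM
    have h : ∀ ξ : Fin n → ℂ, ξ ᵥ* M = 0 → ξ ᵥ* (toC B) = 0 → ξ = 0 := by
      intro ξ h1 h2
      by_contra hξ
      have hA : ξ ᵥ* toC A = lam • ξ := by
        rw [hM, Matrix.vecMul_sub, vecMul_smul_one, sub_eq_zero] at h1
        exact h1
      exact hno ξ hξ hA h2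
    obtain ⟨K, hdet⟩ := pbh_real M B (pbh_dual M (toC B) h)
    obtain ⟨v, hv0, hv⟩ := hK K
    apply hdet
    apply Matrix.exists_mulVec_eq_zero_iff.mp
    refine ⟨v, hv0, ?_⟩
    have : M + toC B * toC K = toC (A + B * K) - lam • 1 := by
      rw [hM, toC_add_mul]; abel
    rw [this, Matrix.sub_mulVec, Matrix.smul_mulVec, Matrix.one_mulVec, hv, sub_self]
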